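/- Let n be a positive integer. (i) For every integer z with 0 < z ≤ n/2, writing α = z/n: binom(n,z) ≤ (1/√(2πn)) · (α(1−α))^{-1/2} · (α^{-α}·(1−α)^{-(1−α)})^n. (ii) For every integer z with 0 < z < n, writing α = z/n: binom(n,z) > (36/49) · (1/√(2πn)) · (α(1−α))^{-1/2} · (α^{-α}·(1−α)^{-(1−α)})^n. -/

import Mathlib

open Stirling Real Filter

private lemma bsb_s_pos {k : ℕ} (hk : 0 < k) : 0 < stirlingSeq k := by
  obtain ⟨m, rfl⟩ := Nat.exists_eq_add_of_lt (Nat.lt_of_lt_of_le Nat.zero_lt_one hk)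
  simpa using stirlingSeq'_pos m

private lemma bsb_s_anti {j k : ℕ} (hj : 0 < j) (hjk : j ≤ k) :
    stirlingSeq k ≤ stirlingSeq j := by
  obtain ⟨m, rfl⟩ := Nat.exists_eq_add_of_lt (Nat.lt_of_lt_of_le Nat.zero_lt_one hj)
  obtain ⟨p, rfl⟩ := Nat.exists_eq_add_of_le hjk
  have := stirlingSeq'_antitone (Nat.le_add_right m p)
  simpa [Nat.succ_eq_add_one, Nat.add_right_comm] using this

private lemma bsb_sqrt_pi_le {k : ℕ} (hk : 0 < k) : Real.sqrt π ≤ stirlingSeq k :=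
  le_of_tendsto tendsto_stirlingSeq_sqrt_pi
    (eventually_atTop.2 ⟨k, fun _ hj => bsb_s_anti hk hj⟩)

private lemma bsb_s_le {k : ℕ} (hk : 0 < k) :
    stirlingSeq k ≤ Real.exp 1 / Real.sqrt 2 := by
  simpa [stirlingSeq_one] using bsb_s_anti Nat.one_pos hk

private lemma bsb_fact_eq {k : ℕ} (hk : 0 < k) :
    (k.factorial : ℝ) = stirlingSeq k * (Real.sqrt (2 * k) * ((k : ℝ) / Real.exp 1) ^ k) := by
  have h1 : (0:ℝ) < Real.sqrt (2 * k) * ((k : ℝ) / Real.exp 1) ^ k := by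
    have : (0:ℝ) < k := by exact_mod_cast hk
    positivity
  rw [stirlingSeq]
  field_simp

private lemma bsb_choose_eq (n z : ℕ) (hz : 0 < z) (hzn : z < n) :
    (n.choose z : ℝ) = stirlingSeq n / (stirlingSeq z * stirlingSeq (n - z)) *
      (Real.sqrt (2 * n) / (Real.sqrt (2 * z) * Real.sqrt (2 * (n - z : ℕ)))) *
      ((n : ℝ) ^ n / ((z : ℝ) ^ z * ((n - z : ℕ) : ℝ) ^ (n - z))) := by
  have hm : 0 < n - z := Nat.sub_pos_of_lt hzn
  have hn : 0 < n := lt_trans hz hzn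
  have key : ((n.choose z : ℕ) : ℝ) * z.factorial * (n - z).factorial = n.factorial := by
    exact_mod_cast congrArg (Nat.cast : ℕ → ℝ)
      (Nat.choose_mul_factorial_mul_factorial (le_of_lt hzn))
  rw [bsb_fact_eq hn, bsb_fact_eq hz, bsb_fact_eq hm] at key
  have hzpos : (0:ℝ) < z := by exact_mod_cast hz
  have hmpos : (0:ℝ) < (n - z : ℕ) := by exact_mod_cast hm
  have hnpos : (0:ℝ) < n := by exact_mod_cast hn
  have hsz := bsb_s_pos hz
  have hsm := bsb_s_pos hm
  have hsn := bsb_s_pos hn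
  have h2z : (0:ℝ) < Real.sqrt (2 * z) := by positivity
  have h2m : (0:ℝ) < Real.sqrt (2 * (n - z : ℕ)) := by positivity
  have hE : (0:ℝ) < Real.exp 1 := Real.exp_pos 1
  rw [div_pow, div_pow, div_pow] at key
  field_simp at key ⊢
  have hcast : ((z:ℝ) + ((n-z:ℕ):ℝ)) = (n:ℝ) := by
    push_cast [Nat.cast_sub hzn.le]; ring
  have hexp : Real.exp (n:ℝ) = Real.exp (z:ℝ) * Real.exp ((n-z:ℕ):ℝ) := by
    rw [← Real.exp_add, hcast]
  rw [← pow_add, Nat.add_sub_cancel' hzn.le] at key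
  have hEzm : (0:ℝ) < Real.exp (z:ℝ) * Real.exp ((n-z:ℕ):ℝ) := by positivity
  apply mul_right_cancel₀ (pow_ne_zero n hE.ne')
  linear_combination key

private lemma bsb_T_eq (n z : ℕ) (hz : 0 < z) (hzn : z < n) (α : ℝ) (hα : α = (z : ℝ) / n) :
    (1 / Real.sqrt (2 * Real.pi * n)) * (1 / Real.sqrt (α * (1 - α))) *
        (α ^ (-α) * (1 - α) ^ (-(1 - α))) ^ n
      = (1 / Real.sqrt Real.pi) *
        (Real.sqrt (2 * n) / (Real.sqrt (2 * z) * Real.sqrt (2 * (n - z : ℕ)))) *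
        ((n : ℝ) ^ n / ((z : ℝ) ^ z * ((n - z : ℕ) : ℝ) ^ (n - z))) := by
  have hn : 0 < n := lt_trans hz hzn
  have hzpos : (0:ℝ) < z := by exact_mod_cast hz
  have hnpos : (0:ℝ) < n := by exact_mod_cast hn
  have hmpos : (0:ℝ) < ((n - z : ℕ) : ℝ) := by exact_mod_cast Nat.sub_pos_of_lt hzn
  have hmcast : ((n - z : ℕ) : ℝ) = (n : ℝ) - z := by push_cast [Nat.cast_sub hzn.le]; ring
  have hα1 : 1 - α = ((n - z : ℕ) : ℝ) / n := by rw [hα, hmcast]; field_simp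
  have hαpos : 0 < α := by rw [hα]; positivity
  have h1αpos : 0 < 1 - α := by rw [hα1]; positivity
  have hp1 : (α ^ (-α)) ^ n = ((n:ℝ)/z) ^ z := by
    rw [← Real.rpow_natCast (α ^ (-α)) n, ← Real.rpow_mul hαpos.le]
    have : -α * n = -(z : ℕ) := by rw [hα]; field_simp
    rw [this, Real.rpow_neg hαpos.le, Real.rpow_natCast, hα, ← inv_pow, inv_div]
  have hp2 : ((1 - α) ^ (-(1 - α))) ^ n = ((n:ℝ)/((n - z : ℕ):ℝ)) ^ (n - z) := by
    rw [← Real.rpow_natCast ((1-α) ^ (-(1-α))) n, ← Real.rpow_mul h1αpos.le]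
    have : -(1-α) * n = -((n - z : ℕ) : ℕ) := by rw [hα1]; field_simp
    rw [this, Real.rpow_neg h1αpos.le, Real.rpow_natCast, hα1, ← inv_pow, inv_div]
  have hpow : (α ^ (-α) * (1 - α) ^ (-(1 - α))) ^ n
      = (n:ℝ)^n / ((z : ℝ) ^ z * ((n - z : ℕ) : ℝ) ^ (n - z)) := by
    rw [mul_pow, hp1, hp2, div_pow, div_pow, div_mul_div_comm, ← pow_add,
      Nat.add_sub_cancel' hzn.le]
  have hαα : α * (1 - α) = ((z : ℝ) * ((n - z : ℕ):ℝ)) / ((n:ℝ) * n) := by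
    rw [hα1, hα]; field_simp
  have h2 : (0:ℝ) < Real.sqrt 2 := by positivity
  have hπ : (0:ℝ) < Real.sqrt π := Real.sqrt_pos.2 Real.pi_pos
  have hsz : (0:ℝ) < Real.sqrt z := Real.sqrt_pos.2 hzpos
  have hsm : (0:ℝ) < Real.sqrt ((n - z : ℕ):ℝ) := Real.sqrt_pos.2 hmpos
  have hsn : (0:ℝ) < Real.sqrt n := Real.sqrt_pos.2 hnpos
  have e1 : Real.sqrt (2 * π * n) = Real.sqrt 2 * Real.sqrt π * Real.sqrt n := by
    rw [Real.sqrt_mul (by positivity), Real.sqrt_mul (by norm_num)]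
  have e2 : Real.sqrt (α * (1 - α)) = Real.sqrt z * Real.sqrt ((n - z:ℕ):ℝ) / n := by
    rw [hαα, Real.sqrt_div (by positivity), Real.sqrt_mul hzpos.le,
      Real.sqrt_mul_self hnpos.le]
  have e4 : Real.sqrt (2 * (z:ℝ)) = Real.sqrt 2 * Real.sqrt z := Real.sqrt_mul (by norm_num) _
  have e5 : Real.sqrt (2 * ((n - z:ℕ):ℝ)) = Real.sqrt 2 * Real.sqrt ((n - z:ℕ):ℝ) :=
    Real.sqrt_mul (by norm_num) _
  have e6 : Real.sqrt (2 * (n:ℝ)) = Real.sqrt 2 * Real.sqrt n := Real.sqrt_mul (by norm_num) _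
  have hnsq : Real.sqrt (n:ℝ) * Real.sqrt n = n := Real.mul_self_sqrt hnpos.le
  have e3 : (1 / Real.sqrt (2 * Real.pi * n)) * (1 / Real.sqrt (α * (1 - α)))
      = (1 / Real.sqrt Real.pi) *
        (Real.sqrt (2 * n) / (Real.sqrt (2 * z) * Real.sqrt (2 * (n - z : ℕ)))) := by
    rw [e1, e2, e4, e5, e6]
    field_simp
    linear_combination (-1 : ℝ) * hnsq
  rw [hpow, e3]

/-- **Stirling-type bounds on binomial coefficients.** For `n > 0`:
(i) if `0 < z ≤ n/2` and `α = z/n`, then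
`C(n,z) ≤ (2πn)^(-1/2) (α(1-α))^(-1/2) (α^(-α) (1-α)^(-(1-α)))^n`;
(ii) if `0 < z < n` and `α = z/n`, then
`C(n,z) > (36/49) (2πn)^(-1/2) (α(1-α))^(-1/2) (α^(-α) (1-α)^(-(1-α)))^n`. -/
theorem binomial_stirling_bounds (n : ℕ) (hn : 0 < n) :
    (∀ z : ℕ, 0 < z → (z : ℝ) ≤ n / 2 → ∀ α : ℝ, α = (z : ℝ) / n →
      (n.choose z : ℝ) ≤ (1 / Real.sqrt (2 * Real.pi * n)) *
        (1 / Real.sqrt (α * (1 - α))) * (α ^ (-α) * (1 - α) ^ (-(1 - α))) ^ n) ∧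
    (∀ z : ℕ, 0 < z → z < n → ∀ α : ℝ, α = (z : ℝ) / n →
      (36 / 49 : ℝ) * ((1 / Real.sqrt (2 * Real.pi * n)) *
        (1 / Real.sqrt (α * (1 - α))) * (α ^ (-α) * (1 - α) ^ (-(1 - α))) ^ n)
          < (n.choose z : ℝ)) := by
  have hnpos : (0:ℝ) < n := by exact_mod_cast hn
  constructor
  · intro z hz hz2 α hα
    have hzn : z < n := by
      have : (z : ℝ) < n := lt_of_le_of_lt hz2 (by linarith)
      exact_mod_cast this
    have hm : 0 < n - z := Nat.sub_pos_of_lt hzn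
    have hzpos : (0:ℝ) < z := by exact_mod_cast hz
    have hmpos : (0:ℝ) < ((n - z : ℕ):ℝ) := by exact_mod_cast hm
    rw [bsb_choose_eq n z hz hzn, bsb_T_eq n z hz hzn α hα]
    have hB : (0:ℝ) < Real.sqrt (2 * n) / (Real.sqrt (2 * z) * Real.sqrt (2 * (n - z : ℕ))) := by
      positivity
    have hC : (0:ℝ) < (n : ℝ) ^ n / ((z : ℝ) ^ z * ((n - z : ℕ) : ℝ) ^ (n - z)) := by
      positivity
    have hA : stirlingSeq n / (stirlingSeq z * stirlingSeq (n - z)) ≤ 1 / Real.sqrt π := by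
      rw [div_le_div_iff₀ (mul_pos (bsb_s_pos hz) (bsb_s_pos hm)) (Real.sqrt_pos.2 Real.pi_pos)]
      have h1 : stirlingSeq n ≤ stirlingSeq z := bsb_s_anti hz hzn.le
      have h2 : Real.sqrt π ≤ stirlingSeq (n - z) := bsb_sqrt_pi_le hm
      have h3 : (0:ℝ) < stirlingSeq n := bsb_s_pos hn
      have h4 : (0:ℝ) < Real.sqrt π := Real.sqrt_pos.2 Real.pi_pos
      nlinarith
    exact mul_le_mul_of_nonneg_right (mul_le_mul_of_nonneg_right hA hB.le) hC.le
  · intro z hz hzn α hα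
    have hm : 0 < n - z := Nat.sub_pos_of_lt hzn
    have hzpos : (0:ℝ) < z := by exact_mod_cast hz
    have hmpos : (0:ℝ) < ((n - z : ℕ):ℝ) := by exact_mod_cast hm
    rw [bsb_choose_eq n z hz hzn, bsb_T_eq n z hz hzn α hα]
    have hB : (0:ℝ) < Real.sqrt (2 * n) / (Real.sqrt (2 * z) * Real.sqrt (2 * (n - z : ℕ))) := by
      positivity
    have hC : (0:ℝ) < (n : ℝ) ^ n / ((z : ℝ) ^ z * ((n - z : ℕ) : ℝ) ^ (n - z)) := by
      positivity
    have hπ : (0:ℝ) < Real.sqrt π := Real.sqrt_pos.2 Real.pi_pos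
    have hszp : (0:ℝ) < stirlingSeq z := bsb_s_pos hz
    have hsmp : (0:ℝ) < stirlingSeq (n - z) := bsb_s_pos hm
    have hsn : Real.sqrt π ≤ stirlingSeq n := bsb_sqrt_pi_le hn
    have hEz : stirlingSeq z ≤ Real.exp 1 / Real.sqrt 2 := bsb_s_le hz
    have hEm : stirlingSeq (n - z) ≤ Real.exp 1 / Real.sqrt 2 := bsb_s_le hm
    have h2sq : Real.sqrt 2 * Real.sqrt 2 = 2 := Real.mul_self_sqrt (by norm_num)
    have hπsq : Real.sqrt π * Real.sqrt π = π := Real.mul_self_sqrt Real.pi_pos.le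
    have hEprod : stirlingSeq z * stirlingSeq (n - z) ≤ Real.exp 1 ^ 2 / 2 := by
      have := mul_le_mul hEz hEm hsmp.le (by positivity : (0:ℝ) ≤ Real.exp 1 / Real.sqrt 2)
      calc stirlingSeq z * stirlingSeq (n - z)
          ≤ (Real.exp 1 / Real.sqrt 2) * (Real.exp 1 / Real.sqrt 2) := this
        _ = Real.exp 1 ^ 2 / 2 := by
            rw [div_mul_div_comm, h2sq]; ring
    have hA : (36 / 49 : ℝ) * (1 / Real.sqrt π)
        < stirlingSeq n / (stirlingSeq z * stirlingSeq (n - z)) := by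
      have step : (36 / 49 : ℝ) * (1 / Real.sqrt π) < Real.sqrt π / (Real.exp 1 ^ 2 / 2) := by
        rw [mul_one_div, div_lt_div_iff₀ hπ (by positivity)]
        nlinarith [Real.pi_gt_d6, Real.exp_one_lt_d9, Real.exp_pos 1, hπsq]
      refine lt_of_lt_of_le step ?_
      exact div_le_div₀ (le_trans hπ.le hsn) hsn (by positivity) hEprod
    calc (36 / 49 : ℝ) * (1 / Real.sqrt π *
          (Real.sqrt (2 * n) / (Real.sqrt (2 * z) * Real.sqrt (2 * (n - z : ℕ)))) *
          ((n : ℝ) ^ n / ((z : ℝ) ^ z * ((n - z : ℕ) : ℝ) ^ (n - z))))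
        = (36 / 49 * (1 / Real.sqrt π)) *
          (Real.sqrt (2 * n) / (Real.sqrt (2 * z) * Real.sqrt (2 * (n - z : ℕ)))) *
          ((n : ℝ) ^ n / ((z : ℝ) ^ z * ((n - z : ℕ) : ℝ) ^ (n - z))) := by ring
      _ < stirlingSeq n / (stirlingSeq z * stirlingSeq (n - z)) *
          (Real.sqrt (2 * n) / (Real.sqrt (2 * z) * Real.sqrt (2 * (n - z : ℕ)))) *
          ((n : ℝ) ^ n / ((z : ℝ) ^ z * ((n - z : ℕ) : ℝ) ^ (n - z))) := by
          apply mul_lt_mul_of_pos_right (mul_lt_mul_of_pos_right hA hB) hC
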